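/- Let W ≥ 0, λ > 0, δ > 0, α > 0 be reals and let f : ℕ → ℝ be a strictly increasing positive function. For each time slot t define the per-slot cost Δ_t(x) = W·exp(−x·λ·δ) + α·f(t)·x for x ∈ ℕ. If k ∈ ℕ minimizes Δ_t over {0,1,…,H} (i.e., Δ_t(k) ≤ Δ_t(x) for all x ≤ H) and t' > t, then for every x' ∈ {0,…,H} with x' > k we have Δ_{t'}(k) < Δ_{t'}(x'). -/
import Mathlib

/-- Lemma 1: if `k` minimizes the per-slot cost `Δ t x = W·exp(−xλδ) + α·f(t)·x`
over `{0,…,H}` in slot `t`, then in any later slot `t' > t`, any `x' ∈ {0,…,H}`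
with `x' > k` has strictly larger cost than `k`. -/
theorem stmt_0 (W lam δ α : ℝ) (hW : 0 ≤ W) (hlam : 0 < lam) (hδ : 0 < δ)
    (hα : 0 < α) (f : ℕ → ℝ) (hf : StrictMono f) (hfpos : ∀ t, 0 < f t)
    (Δ : ℕ → ℕ → ℝ)
    (hΔ : ∀ t x, Δ t x = W * Real.exp (-(x : ℝ) * lam * δ) + α * f t * x)
    (H k t t' : ℕ) (hkH : k ≤ H)
    (hmin : ∀ x ≤ H, Δ t k ≤ Δ t x)
    (htt' : t < t')
    (x' : ℕ) (hx'H : x' ≤ H) (hkx' : k < x') :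
    Δ t' k < Δ t' x' := by
  have h1 := hmin x' hx'H
  rw [hΔ, hΔ] at h1
  rw [hΔ, hΔ]
  have hft : f t < f t' := hf htt'
  have hcast : (k : ℝ) < (x' : ℝ) := by exact_mod_cast hkx'
  nlinarith [mul_pos hα (sub_pos.mpr hft), sub_pos.mpr hcast,
    mul_pos (mul_pos hα (sub_pos.mpr hft)) (sub_pos.mpr hcast)]
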